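/- Let λ₂, λ₃ ≥ 1 and set λ₁ = √(λ₂² + λ₃² − 1), a = √(λ₂(λ₂²−1))/√λ₁, b = −√(λ₂ − 1/λ₂)·√λ₁, c = √(λ₃(λ₃²−1)/λ₁), d = −√(λ₃ − 1/λ₃)·√λ₁, e = 0, f = √((λ₂²−1)(λ₃²−1))/√(λ₂λ₃). Then the 6×6 matrix γ with diagonal blocks λᵢ·I and off-diagonal blocks D₁₂ = diag(a,b), D₁₃ = diag(c,d), D₂₃ = diag(e,f) satisfies γ J₃ γ = J₃. -/

import Mathlib

open Matrix

/-- The 2×2 standard symplectic form. -/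
noncomputable def J2x2 : Matrix (Fin 2) (Fin 2) ℝ := !![0, -1; 1, 0]

/-- The 6×6 matrix with 2×2 diagonal blocks `λᵢ·I` and off-diagonal blocks
`D₁₂, D₁₃, D₂₃`, indexed by `Fin 3 × Fin 2` (mode, quadrature). -/
noncomputable def threeModeCM (l₁ l₂ l₃ : ℝ) (D₁₂ D₁₃ D₂₃ : Matrix (Fin 2) (Fin 2) ℝ) :
    Matrix (Fin 3 × Fin 2) (Fin 3 × Fin 2) ℝ :=
  fun p q =>
    (![![l₁ • (1 : Matrix (Fin 2) (Fin 2) ℝ), D₁₂, D₁₃],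
       ![D₁₂ᵀ, l₂ • 1, D₂₃],
       ![D₁₃ᵀ, D₂₃ᵀ, l₃ • 1]] p.1 q.1) p.2 q.2

/-- `J₃ = J ⊕ J ⊕ J` on the mode-ordered basis. -/
noncomputable def J₃ : Matrix (Fin 3 × Fin 2) (Fin 3 × Fin 2) ℝ :=
  fun p q => if p.1 = q.1 then J2x2 p.2 q.2 else 0

set_option maxHeartbeats 2000000 in
theorem key_matrix_identity (l₁ l₂ l₃ a b c d e f : ℝ)
    (I1 : a*b = 1 - l₂^2) (I2 : c*d = 1 - l₃^2) (I3 : l₁^2 = l₂^2 + l₃^2 - 1)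
    (I4 : l₁*a + l₂*b = 0) (I5 : l₁*c + l₃*d = 0)
    (I6 : l₁*b + l₂*a + c*f = 0) (I7 : l₁*d + l₃*c + a*f = 0)
    (I8 : a*d + l₂*f = 0) (I9 : b*c + l₃*f = 0) (he : e = 0) :
    threeModeCM l₁ l₂ l₃ (Matrix.diagonal ![a, b]) (Matrix.diagonal ![c, d])
      (Matrix.diagonal ![e, f]) * J₃ *
    threeModeCM l₁ l₂ l₃ (Matrix.diagonal ![a, b]) (Matrix.diagonal ![c, d])
      (Matrix.diagonal ![e, f]) = J₃ := by
  subst he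
  ext ⟨i, α⟩ ⟨j, β⟩
  fin_cases i <;> fin_cases j <;> fin_cases α <;> fin_cases β <;>
    simp [threeModeCM, J₃, J2x2, Matrix.mul_apply, Fintype.sum_prod_type,
      Fin.sum_univ_succ, Matrix.diagonal, Matrix.one_apply] <;>
    nlinarith [I1, I2, I3, I4, I5, I6, I7, I8, I9]

theorem stmt_12 (l₂ l₃ : ℝ) (h₂ : 1 ≤ l₂) (h₃ : 1 ≤ l₃)
    (l₁ a b c d e f : ℝ)
    (hl₁ : l₁ = Real.sqrt (l₂ ^ 2 + l₃ ^ 2 - 1))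
    (ha : a = Real.sqrt (l₂ * (l₂ ^ 2 - 1)) / Real.sqrt l₁)
    (hb : b = -Real.sqrt (l₂ - 1 / l₂) * Real.sqrt l₁)
    (hc : c = Real.sqrt (l₃ * (l₃ ^ 2 - 1) / l₁))
    (hd : d = -Real.sqrt (l₃ - 1 / l₃) * Real.sqrt l₁)
    (he : e = 0)
    (hf : f = Real.sqrt ((l₂ ^ 2 - 1) * (l₃ ^ 2 - 1)) / Real.sqrt (l₂ * l₃))
    (γ : Matrix (Fin 3 × Fin 2) (Fin 3 × Fin 2) ℝ)
    (hγ : γ = threeModeCM l₁ l₂ l₃ (Matrix.diagonal ![a, b])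
        (Matrix.diagonal ![c, d]) (Matrix.diagonal ![e, f])) :
    γ * J₃ * γ = J₃ := by
  have hl2 : (0:ℝ) < l₂ := lt_of_lt_of_le one_pos h₂
  have hl3 : (0:ℝ) < l₃ := lt_of_lt_of_le one_pos h₃
  have hs2 : (0:ℝ) ≤ l₂ ^ 2 - 1 := by nlinarith
  have hs3 : (0:ℝ) ≤ l₃ ^ 2 - 1 := by nlinarith
  have h1 : (0:ℝ) ≤ l₂ ^ 2 + l₃ ^ 2 - 1 := by nlinarith
  have hl1sq : l₁ ^ 2 = l₂ ^ 2 + l₃ ^ 2 - 1 := by rw [hl₁]; exact Real.sq_sqrt h1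
  have hl1nn : (0:ℝ) ≤ l₁ := hl₁ ▸ Real.sqrt_nonneg _
  have hl1pos : (0:ℝ) < l₁ := by nlinarith
  set u : ℝ := Real.sqrt ((l₂ ^ 2 - 1) / (l₂ * l₁)) with hu
  set v : ℝ := Real.sqrt ((l₃ ^ 2 - 1) / (l₃ * l₁)) with hv
  have hu2 : l₂ * l₁ * u ^ 2 = l₂ ^ 2 - 1 := by
    rw [hu, Real.sq_sqrt (by positivity)]; field_simp
  have hv2 : l₃ * l₁ * v ^ 2 = l₃ ^ 2 - 1 := by
    rw [hv, Real.sq_sqrt (by positivity)]; field_simp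
  have ha' : a = l₂ * u := by
    rw [ha, ← Real.sqrt_div (by positivity : (0:ℝ) ≤ l₂ * (l₂ ^ 2 - 1)),
      show l₂ * u = Real.sqrt (l₂ ^ 2) * u from by rw [Real.sqrt_sq hl2.le],
      hu, ← Real.sqrt_mul (sq_nonneg l₂)]
    congr 1
    field_simp
  have hb' : b = -(l₁ * u) := by
    have hx : Real.sqrt (l₂ - 1 / l₂) * Real.sqrt l₁ = l₁ * u := by
      rw [show l₂ - 1 / l₂ = (l₂ ^ 2 - 1) / l₂ from by field_simp,
        ← Real.sqrt_mul (by positivity),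
        show l₁ * u = Real.sqrt (l₁ ^ 2) * u from by rw [Real.sqrt_sq hl1nn],
        hu, ← Real.sqrt_mul (sq_nonneg l₁)]
      congr 1
      field_simp
    rw [hb, neg_mul, hx]
  have hc' : c = l₃ * v := by
    rw [hc, show l₃ * v = Real.sqrt (l₃ ^ 2) * v from by rw [Real.sqrt_sq hl3.le],
      hv, ← Real.sqrt_mul (sq_nonneg l₃)]
    congr 1
    field_simp
  have hd' : d = -(l₁ * v) := by
    have hx : Real.sqrt (l₃ - 1 / l₃) * Real.sqrt l₁ = l₁ * v := by
      rw [show l₃ - 1 / l₃ = (l₃ ^ 2 - 1) / l₃ from by field_simp,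
        ← Real.sqrt_mul (by positivity),
        show l₁ * v = Real.sqrt (l₁ ^ 2) * v from by rw [Real.sqrt_sq hl1nn],
        hv, ← Real.sqrt_mul (sq_nonneg l₁)]
      congr 1
      field_simp
    rw [hd, neg_mul, hx]
  have hf' : f = l₁ * (u * v) := by
    rw [hf, ← Real.sqrt_div (by positivity : (0:ℝ) ≤ (l₂ ^ 2 - 1) * (l₃ ^ 2 - 1)),
      show l₁ * (u * v) = Real.sqrt (l₁ ^ 2) * (u * v) from by rw [Real.sqrt_sq hl1nn],
      hu, hv, ← Real.sqrt_mul (by positivity), ← Real.sqrt_mul (sq_nonneg l₁)]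
    congr 1
    field_simp
  have I1 : a * b = 1 - l₂ ^ 2 := by rw [ha', hb']; linear_combination -hu2
  have I2 : c * d = 1 - l₃ ^ 2 := by rw [hc', hd']; linear_combination -hv2
  have I4 : l₁ * a + l₂ * b = 0 := by rw [ha', hb']; ring
  have I5 : l₁ * c + l₃ * d = 0 := by rw [hc', hd']; ring
  have I6 : l₁ * b + l₂ * a + c * f = 0 := by
    rw [ha', hb', hc', hf']; linear_combination u * hv2 - u * hl1sq
  have I7 : l₁ * d + l₃ * c + a * f = 0 := by
    rw [ha', hd', hc', hf']; linear_combination v * hu2 - v * hl1sq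
  have I8 : a * d + l₂ * f = 0 := by rw [ha', hd', hf']; ring
  have I9 : b * c + l₃ * f = 0 := by rw [hb', hc', hf']; ring
  rw [hγ]
  exact key_matrix_identity l₁ l₂ l₃ a b c d e f I1 I2 hl1sq I4 I5 I6 I7 I8 I9 he
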